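/- arXiv:2001.04703 — 8 statements merged into one kernel-verified Lean document; each statement's English description precedes it below -/
import Mathlib

section
/- The absolute value of the determinant of the n×n matrix with (j,k) entry exp(iπ(j-1)(k-1)/n) equals 2^{n(n-1)/2} · ∏_{j=1}^{n-1} sin(jπ/(2n))^{n-j}. -/
open Finset Real

lemma abs_exp_sub_exp_mul_I (a b : ℝ) :
    ‖Complex.exp (b * Complex.I) - Complex.exp (a * Complex.I)‖ =
      2 * |Real.sin ((b - a) / 2)| := by
  have e1 : (b : ℂ) * Complex.I =
      ((b + a) / 2 : ℝ) * Complex.I + (((b - a) / 2 : ℝ) * Complex.I) := by push_cast; ring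
  have e2 : (a : ℂ) * Complex.I =
      ((b + a) / 2 : ℝ) * Complex.I + ((-((b - a) / 2) : ℝ) * Complex.I) := by push_cast; ring
  rw [e1, e2, Complex.exp_add, Complex.exp_add, ← mul_sub, norm_mul,
    Complex.norm_exp_ofReal_mul_I, one_mul]
  have h : Complex.exp (((b - a) / 2 : ℝ) * Complex.I)
      - Complex.exp ((-((b - a) / 2) : ℝ) * Complex.I)
      = 2 * (Real.sin ((b - a) / 2) : ℂ) * Complex.I := by
    rw [Complex.exp_mul_I, Complex.exp_mul_I, Complex.ofReal_sin]
    push_cast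
    rw [Complex.cos_neg, Complex.sin_neg]
    ring
  rw [h, norm_mul, norm_mul, Complex.norm_I, Complex.norm_two, Complex.norm_real, Real.norm_eq_abs, mul_one]

lemma prod_Ioo_sub (n : ℕ) (g : ℕ → ℝ) :
    ∏ i ∈ range n, ∏ j ∈ Ioo i n, g (j - i) = ∏ d ∈ Icc 1 (n - 1), g d ^ (n - d) := by
  induction n with
  | zero => simp
  | succ n ih =>
    have hIoo : Ioo n (n + 1) = (∅ : Finset ℕ) := by
      ext x; simp only [mem_Ioo, Finset.notMem_empty, iff_false]; omega
    rw [Finset.prod_range_succ, hIoo, Finset.prod_empty, mul_one]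
    have hins : ∀ i ∈ range n, ∏ j ∈ Ioo i (n + 1), g (j - i)
        = g (n - i) * ∏ j ∈ Ioo i n, g (j - i) := by
      intro i hi
      rw [Finset.mem_range] at hi
      have hset : Ioo i (n + 1) = insert n (Ioo i n) := by
        ext x; simp only [mem_Ioo, Finset.mem_insert]; omega
      rw [hset, Finset.prod_insert (by simp [mem_Ioo])]
    rw [Finset.prod_congr rfl hins, Finset.prod_mul_distrib, ih]
    have h1 : ∏ i ∈ range n, g (n - i) = ∏ d ∈ Icc 1 n, g d := by
      have := Finset.prod_range_reflect (fun j => g (j + 1)) n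
      rw [show (∏ i ∈ range n, g (n - i)) = ∏ j ∈ range n, g (n - 1 - j + 1) from
        Finset.prod_congr rfl (fun i hi => by rw [Finset.mem_range] at hi; congr 1; omega),
        this]
      rw [show Icc 1 n = Ico 1 (n + 1) from (Finset.Ico_add_one_right_eq_Icc 1 n).symm,
        Finset.prod_Ico_eq_prod_range]
      exact Finset.prod_congr (by rw [Nat.add_sub_cancel]) (fun i _ => by congr 1; omega)
    rw [h1, Nat.add_sub_cancel]
    rcases Nat.eq_zero_or_pos n with rfl | hn
    · simp
    have h2 : ∏ d ∈ Icc 1 n, g d ^ (n + 1 - d)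
        = (∏ d ∈ Icc 1 n, g d ^ (n - d)) * ∏ d ∈ Icc 1 n, g d := by
      rw [← Finset.prod_mul_distrib]
      refine Finset.prod_congr rfl fun d hd => ?_
      rw [Finset.mem_Icc] at hd
      rw [← pow_succ]
      congr 1
      omega
    rw [h2]
    have h3 : ∏ d ∈ Icc 1 n, g d ^ (n - d) = ∏ d ∈ Icc 1 (n - 1), g d ^ (n - d) := by
      have hicc : Icc 1 n = insert n (Icc 1 (n - 1)) := by
        ext x; simp only [Finset.mem_Icc, Finset.mem_insert]; omega
      rw [hicc, Finset.prod_insert (by simp only [Finset.mem_Icc]; omega), Nat.sub_self,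
        pow_zero, one_mul]
    rw [h3]
    ring

lemma sum_Icc_sub (n : ℕ) (hn : 0 < n) : ∑ d ∈ Icc 1 (n - 1), (n - d) = n * (n - 1) / 2 := by
  obtain ⟨m, rfl⟩ : ∃ m, n = m + 1 := ⟨n - 1, by omega⟩
  have h1 : Icc 1 (m + 1 - 1) = Ico 1 (m + 1) := by
    ext x; simp only [Finset.mem_Icc, Finset.mem_Ico]; omega
  rw [h1, Finset.sum_Ico_eq_sum_range]
  have h2 : ∑ i ∈ range (m + 1 - 1), (m + 1 - (1 + i)) = ∑ i ∈ range m, (i + 1) := by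
    have := Finset.sum_range_reflect (fun j => j + 1) m
    rw [← this]
    exact Finset.sum_congr (by rw [Nat.add_sub_cancel]) (fun i hi => by rw [Finset.mem_range] at hi; omega)
  have h3 : ∑ i ∈ range (m + 1), i = ∑ i ∈ range m, (i + 1) := by
    rw [Finset.sum_range_succ']; simp
  rw [h2, ← h3, Finset.sum_range_id]

/-- The absolute value of the determinant of the n×n matrix with (j,k) entry
`exp(iπ(j-1)(k-1)/n)` equals `2^(n(n-1)/2) · ∏_{j=1}^{n-1} sin(jπ/(2n))^(n-j)`. -/
theorem abs_det_exp_matrix (n : ℕ) (hn : 0 < n) :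
    ‖(Matrix.det (Matrix.of fun j k : Fin n =>
        Complex.exp (Real.pi * Complex.I * (j : ℕ) * (k : ℕ) / n)))‖ =
      2 ^ (n * (n - 1) / 2) *
        ∏ j ∈ Finset.Icc 1 (n - 1), Real.sin (j * Real.pi / (2 * n)) ^ (n - j) := by
  set v : Fin n → ℂ := fun j => Complex.exp ((Real.pi * j / n : ℝ) * Complex.I) with hv
  have hA : (Matrix.of fun j k : Fin n =>
      Complex.exp (Real.pi * Complex.I * (j : ℕ) * (k : ℕ) / n)) = Matrix.vandermonde v := by
    ext j k
    simp only [Matrix.of_apply, Matrix.vandermonde_apply, hv]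
    rw [← Complex.exp_nat_mul]
    congr 1
    push_cast
    ring
  set g : ℕ → ℝ := fun d => 2 * Real.sin (d * Real.pi / (2 * n)) with hg
  rw [hA, Matrix.det_vandermonde]
  simp only [Complex.norm_prod]
  have key : ∀ i : Fin n, ∏ j ∈ Ioi i, ‖v j - v i‖
      = ∏ j ∈ Ioi i, g ((j : ℕ) - (i : ℕ)) := by
    intro i
    refine Finset.prod_congr rfl fun j hj => ?_
    rw [Finset.mem_Ioi] at hj
    have hij : (i : ℕ) < (j : ℕ) := hj
    rw [hv]
    rw [abs_exp_sub_exp_mul_I]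
    have harg : (Real.pi * j / n - Real.pi * i / n) / 2
        = (((j : ℕ) - (i : ℕ) : ℕ) : ℝ) * Real.pi / (2 * n) := by
      rw [Nat.cast_sub hij.le]
      field_simp
    rw [harg, hg]
    congr 1
    have hd1 : (1 : ℝ) ≤ (((j : ℕ) - (i : ℕ) : ℕ) : ℝ) := by
      have : 1 ≤ (j : ℕ) - (i : ℕ) := by omega
      exact_mod_cast this
    have hdn : (((j : ℕ) - (i : ℕ) : ℕ) : ℝ) < 2 * n := by
      have : (j : ℕ) - (i : ℕ) < 2 * n := by have := j.isLt; omega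
      exact_mod_cast this
    have hnpos : (0 : ℝ) < n := by exact_mod_cast hn
    have hpos : 0 < (((j : ℕ) - (i : ℕ) : ℕ) : ℝ) * Real.pi / (2 * n) := by
      apply div_pos (mul_pos (by linarith) Real.pi_pos) (by linarith)
    have hlt : (((j : ℕ) - (i : ℕ) : ℕ) : ℝ) * Real.pi / (2 * n) < Real.pi := by
      rw [div_lt_iff₀ (by linarith)]
      have := Real.pi_pos
      nlinarith
    exact abs_of_pos (Real.sin_pos_of_pos_of_lt_pi hpos hlt)
  rw [Finset.prod_congr rfl fun i _ => key i]
  have hfin : ∏ i : Fin n, ∏ j ∈ Ioi i, g ((j : ℕ) - (i : ℕ))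
      = ∏ i ∈ range n, ∏ j ∈ Ioo i n, g (j - i) := by
    rw [← Fin.prod_univ_eq_prod_range (fun i => ∏ j ∈ Ioo i n, g (j - i)) n]
    refine Finset.prod_congr rfl fun i _ => ?_
    have hmap : (Ioi i).map Fin.valEmbedding = Ioo (i : ℕ) n := by
      rw [Fin.map_valEmbedding_Ioi]
    rw [← hmap, Finset.prod_map]
    rfl
  rw [hfin, prod_Ioo_sub n g, hg]
  simp only [mul_pow]
  rw [Finset.prod_mul_distrib, Finset.prod_pow_eq_pow_sum, sum_Icc_sub n hn]
end

section
/- The product over 1 ≤ k < j ≤ n of |exp(iπ(j-1)/n) - exp(iπ(k-1)/n)| equals 2^{n(n-1)/2} · ∏_{j=1}^{n-1} sin(jπ/(2n))^{n-j}. -/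
open Finset Real

lemma absA (a b : ℝ) : ‖Complex.exp (a*Complex.I) - Complex.exp (b*Complex.I)‖ = 2 * |Real.sin ((a-b)/2)| := by
  have key : Complex.exp (a*Complex.I) - Complex.exp (b*Complex.I)
      = Complex.exp ((((a+b)/2 : ℝ))*Complex.I) * (2*Complex.I*Complex.sin (((a-b)/2 : ℝ))) := by
    rw [Complex.sin]
    push_cast
    have h1 : Complex.exp (((a:ℂ)+b)/2*Complex.I) * Complex.exp (-(((a:ℂ)-b)/2)*Complex.I) = Complex.exp (b*Complex.I) := by
      rw [← Complex.exp_add]; ring_nf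
    have h2 : Complex.exp (((a:ℂ)+b)/2*Complex.I) * Complex.exp ((((a:ℂ)-b)/2)*Complex.I) = Complex.exp (a*Complex.I) := by
      rw [← Complex.exp_add]; ring_nf
    linear_combination (Complex.exp ((a:ℂ)*Complex.I) - Complex.exp ((b:ℂ)*Complex.I)) * Complex.I_sq + Complex.I^2 * h2 - Complex.I^2 * h1
  rw [key, norm_mul, Complex.norm_exp_ofReal_mul_I, one_mul, norm_mul, norm_mul,
    Complex.norm_two, Complex.norm_I, ← Complex.ofReal_sin, Complex.norm_real, Real.norm_eq_abs]
  ring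

lemma prodB (g : ℕ → ℝ) : ∀ n : ℕ, ∏ j ∈ range n, ∏ k ∈ range j, g (j - k)
    = ∏ d ∈ range n, g (d+1) ^ (n-1-d) := by
  intro n
  induction n with
  | zero => simp
  | succ n ih =>
    rw [Finset.prod_range_succ, ih, Finset.prod_range_succ (f := fun d => g (d+1) ^ (n+1-1-d))]
    have h1 : ∏ k ∈ range n, g (n - k) = ∏ d ∈ range n, g (d+1) := by
      rw [← Finset.prod_range_reflect (fun j => g (j+1)) n]
      apply Finset.prod_congr rfl
      intro j hj
      rw [Finset.mem_range] at hj
      congr 1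
      omega
    have h2 : ∀ d ∈ range n, g (d+1) ^ (n+1-1-d) = g (d+1) ^ (n-1-d) * g (d+1) := by
      intro d hd
      rw [Finset.mem_range] at hd
      rw [← pow_succ]
      congr 1
      omega
    rw [Finset.prod_congr rfl h2, Finset.prod_mul_distrib]
    rw [h1]; simp


/-- The product over `1 ≤ k < j ≤ n` of `|exp(iπ(j-1)/n) - exp(iπ(k-1)/n)|` equals
`2^(n(n-1)/2) · ∏_{j=1}^{n-1} sin(jπ/(2n))^(n-j)`. -/
theorem prod_abs_exp_diff (n : ℕ) (hn : 0 < n) :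
    (∏ j : Fin n, ∏ k ∈ Finset.Iio j,
        ‖Complex.exp (Real.pi * Complex.I * (j : ℕ) / n) -
          Complex.exp (Real.pi * Complex.I * (k : ℕ) / n)‖) =
      2 ^ (n * (n - 1) / 2) *
        ∏ j ∈ Finset.Icc 1 (n - 1), Real.sin (j * Real.pi / (2 * n)) ^ (n - j) := by
  obtain ⟨m, rfl⟩ : ∃ m, n = m + 1 := ⟨n - 1, by omega⟩
  set n := m + 1 with hnm
  have hn0 : (0:ℝ) < n := by positivity
  -- step 1: each factor
  have hfac : ∀ j k : ℕ, k < j → j < n →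
      ‖Complex.exp (Real.pi * Complex.I * j / n) -
        Complex.exp (Real.pi * Complex.I * k / n)‖ = 2 * Real.sin ((j - k : ℕ) * Real.pi / (2*n)) := by
    intro j k hkj hjn
    have e1 : (Real.pi : ℂ) * Complex.I * j / n = ((Real.pi * j / n : ℝ) : ℂ) * Complex.I := by
      push_cast; ring
    have e2 : (Real.pi : ℂ) * Complex.I * k / n = ((Real.pi * k / n : ℝ) : ℂ) * Complex.I := by
      push_cast; ring
    rw [e1, e2, absA]
    have harg : (Real.pi * j / n - Real.pi * k / n) / 2 = ((j - k : ℕ) : ℝ) * Real.pi / (2*n) := by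
      rw [Nat.cast_sub hkj.le]
      field_simp
    rw [harg, abs_of_nonneg]
    apply Real.sin_nonneg_of_nonneg_of_le_pi
    · positivity
    · rw [div_le_iff₀ (by positivity)]
      have : ((j - k : ℕ) : ℝ) ≤ n := by
        exact_mod_cast Nat.le_of_lt (by omega)
      nlinarith [Real.pi_pos]
  -- step 2: convert to range double product
  have step2 : (∏ j : Fin n, ∏ k ∈ Finset.Iio j,
        ‖Complex.exp (Real.pi * Complex.I * (j : ℕ) / n) -
          Complex.exp (Real.pi * Complex.I * (k : ℕ) / n)‖)
      = ∏ j ∈ range n, ∏ k ∈ range j, (2 * Real.sin (((j - k : ℕ) : ℝ) * Real.pi / (2*n))) := by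
    rw [← Fin.prod_univ_eq_prod_range (fun j => ∏ k ∈ range j, (2 * Real.sin (((j - k : ℕ) : ℝ) * Real.pi / (2*n))))]
    apply Finset.prod_congr rfl
    intro j _
    rw [← Nat.Iio_eq_range, ← Fin.map_valEmbedding_Iio, Finset.prod_map]
    apply Finset.prod_congr rfl
    intro k hk
    rw [Finset.mem_Iio] at hk
    exact hfac j k hk j.isLt
  rw [step2, prodB (fun d => 2 * Real.sin ((d : ℝ) * Real.pi / (2*n))) n]
  -- step 3: split off powers of 2
  have h2s : ∀ d ∈ range n, (2 * Real.sin (((d+1 : ℕ) : ℝ) * Real.pi / (2*n))) ^ (n-1-d)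
      = 2 ^ (n-1-d) * Real.sin (((d+1 : ℕ) : ℝ) * Real.pi / (2*n)) ^ (n-1-d) := fun d _ => mul_pow ..
  rw [Finset.prod_congr rfl h2s, Finset.prod_mul_distrib, Finset.prod_pow_eq_pow_sum]
  have hsum : ∑ d ∈ range n, (n-1-d) = n * (n-1) / 2 := by
    rw [Finset.sum_range_reflect (fun d => d) n, Finset.sum_range_id]
  rw [hsum]
  congr 1
  -- step 4: reindex the sine product
  have hlast : ∏ d ∈ range n, Real.sin (((d+1 : ℕ) : ℝ) * Real.pi / (2*n)) ^ (n-1-d)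
      = ∏ d ∈ range m, Real.sin (((d+1 : ℕ) : ℝ) * Real.pi / (2*n)) ^ (n-1-d) := by
    rw [Finset.prod_range_succ]
    simp [hnm]
  rw [hlast]
  apply Finset.prod_nbij' (fun d => d + 1) (fun j => j - 1)
  · intro d hd; rw [Finset.mem_range] at hd; simp [hnm]; omega
  · intro j hj; rw [Finset.mem_Icc] at hj; rw [Finset.mem_range]; omega
  · intro d _; omega
  · intro j hj; rw [Finset.mem_Icc] at hj; omega
  · intro d hd
    rw [Finset.mem_range] at hd
    have : n - (d+1) = n - 1 - d := by omega
    rw [this]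
end

section
/- The determinant of the n×n matrix with (i,j) entry T^{n+j-i}/(n+j-i)! (for 1 ≤ i,j ≤ n) equals T^{n²} · ∏_{j=0}^{n-1} j!/(n+j)!. -/
open Finset Matrix Nat

lemma det_descFactorial_matrix (n : ℕ) :
    Matrix.det (Matrix.of fun i j : Fin n => ((n + (j : ℕ)).descFactorial (i : ℕ) : ℝ)) =
      ∏ j ∈ Finset.range n, (Nat.factorial j : ℝ) := by
  rw [← Matrix.det_transpose]
  have h : (Matrix.of fun i j : Fin n => ((n + (j : ℕ)).descFactorial (i : ℕ) : ℝ))ᵀ =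
      Matrix.of fun i j : Fin n =>
        (descPochhammer ℝ (j : ℕ)).eval (((n + (i : ℕ) : ℕ) : ℝ)) := by
    ext i j
    simp only [Matrix.transpose_apply, Matrix.of_apply]
    rw [descPochhammer_eval_eq_descFactorial]
  rw [h, ← Matrix.det_eval_matrixOfPolynomials_eq_det_vandermonde _ _
      (fun i => descPochhammer_natDegree ℝ i) (fun i => monic_descPochhammer ℝ i)]
  have h2 : (fun i : Fin n => ((n + (i : ℕ) : ℕ) : ℝ)) =
      fun i : Fin n => ((i : ℕ) : ℝ) + (n : ℝ) := by
    ext i; push_cast; ring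
  rw [h2, Matrix.det_vandermonde_add]
  cases n with
  | zero => simp
  | succ m =>
      rw [Matrix.det_vandermonde_id_eq_superFactorial m,
        ← Nat.prod_range_succ_factorial m, Nat.cast_prod]

/-- The determinant of the n×n matrix with (i,j) entry `T^(n+j-i)/(n+j-i)!`
(indices zero-based, so the entry is `T^(n+j-i)/(n+j-i)!` with `0 ≤ i,j ≤ n-1`)
equals `T^(n²) · ∏_{j=0}^{n-1} j!/(n+j)!`. -/
theorem det_factorial_matrix (n : ℕ) (T : ℝ) :
    Matrix.det (Matrix.of fun i j : Fin n =>
        T ^ (n + (j : ℕ) - (i : ℕ)) / (Nat.factorial (n + (j : ℕ) - (i : ℕ)) : ℝ)) =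
      T ^ (n ^ 2) * ∏ j ∈ Finset.range n,
        (Nat.factorial j : ℝ) / (Nat.factorial (n + j) : ℝ) := by
  have hM : (Matrix.of fun i j : Fin n =>
      T ^ (n + (j : ℕ) - (i : ℕ)) / (Nat.factorial (n + (j : ℕ) - (i : ℕ)) : ℝ)) =
      Matrix.of fun i j : Fin n => T ^ (n - (i : ℕ)) *
        ((T ^ (j : ℕ) / (Nat.factorial (n + (j : ℕ)) : ℝ)) *
          ((n + (j : ℕ)).descFactorial (i : ℕ) : ℝ)) := by
    ext i j
    have hi : (i : ℕ) < n := i.isLt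
    have h1 : n + (j : ℕ) - (i : ℕ) = (n - (i : ℕ)) + (j : ℕ) := by omega
    have h2 : ((Nat.factorial (n + (j : ℕ))) : ℝ) =
        ((Nat.factorial (n + (j : ℕ) - (i : ℕ))) : ℝ) * ((n + (j : ℕ)).descFactorial (i : ℕ) : ℝ) := by
      rw [← Nat.cast_mul, Nat.factorial_mul_descFactorial (by omega)]
    have hf1 : ((Nat.factorial (n + (j : ℕ) - (i : ℕ))) : ℝ) ≠ 0 := Nat.cast_ne_zero.mpr (Nat.factorial_ne_zero _)
    have hd : ((n + (j : ℕ)).descFactorial (i : ℕ) : ℝ) ≠ 0 :=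
      Nat.cast_ne_zero.mpr (fun h => absurd (Nat.descFactorial_eq_zero_iff_lt.mp h) (by omega))
    simp only [Matrix.of_apply]
    rw [h2, h1, pow_add]
    field_simp
  rw [hM]
  rw [show (Matrix.of fun i j : Fin n => T ^ (n - (i : ℕ)) *
        ((T ^ (j : ℕ) / (Nat.factorial (n + (j : ℕ)) : ℝ)) *
          ((n + (j : ℕ)).descFactorial (i : ℕ) : ℝ))) =
      Matrix.of fun i j : Fin n => (fun k : Fin n => T ^ (n - (k : ℕ))) i *
        (Matrix.of fun i j : Fin n =>
          (fun k : Fin n => T ^ (k : ℕ) / (Nat.factorial (n + (k : ℕ)) : ℝ)) j *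
          (Matrix.of fun i j : Fin n => ((n + (j : ℕ)).descFactorial (i : ℕ) : ℝ)) i j) i j
      from rfl]
  rw [Matrix.det_mul_column, Matrix.det_mul_row, det_descFactorial_matrix]
  have hT : (∏ i : Fin n, T ^ (n - (i : ℕ))) * (∏ i : Fin n, T ^ (i : ℕ)) = T ^ (n ^ 2) := by
    rw [Finset.prod_pow_eq_pow_sum, Finset.prod_pow_eq_pow_sum, ← pow_add]
    congr 1
    rw [← Finset.sum_add_distrib]
    have : ∀ i ∈ Finset.univ (α := Fin n), (n - (i : ℕ)) + (i : ℕ) = n := by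
      intro i _; have := i.isLt; omega
    rw [Finset.sum_congr rfl this, Finset.sum_const, Finset.card_univ, Fintype.card_fin,
      smul_eq_mul, pow_two]
  have hsplit : ∏ i : Fin n, (T ^ (i : ℕ) / (Nat.factorial (n + (i : ℕ)) : ℝ)) =
      (∏ i : Fin n, T ^ (i : ℕ)) * ∏ i : Fin n, (1 / (Nat.factorial (n + (i : ℕ)) : ℝ)) := by
    rw [← Finset.prod_mul_distrib]
    congr 1; ext i; ring
  rw [hsplit]
  rw [Fin.prod_univ_eq_prod_range (fun i => (1 : ℝ) / (Nat.factorial (n + i) : ℝ))]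
  have : ∏ j ∈ Finset.range n, ((Nat.factorial j) : ℝ) / ((Nat.factorial (n + j)) : ℝ) =
      (∏ j ∈ Finset.range n, (1 : ℝ) / ((Nat.factorial (n + j)) : ℝ)) * ∏ j ∈ Finset.range n, ((Nat.factorial j) : ℝ) := by
    rw [← Finset.prod_mul_distrib]
    congr 1; ext j; ring
  rw [this, ← hT]
  ring
end

section
/- The determinant of the n×n matrix with (i,j) entry equal to the binomial coefficient C(n+j-1, i-1) (for 1 ≤ i,j ≤ n) equals 1. -/
/-- The determinant of the n×n matrix with (i,j) entry `C(n+j-1, i-1)` for `1 ≤ i,j ≤ n`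
(here zero-indexed: entry `C(n+j, i)` for `0 ≤ i,j ≤ n-1`) equals 1. -/
theorem det_binomial_matrix (n : ℕ) :
    Matrix.det (Matrix.of fun i j : Fin n => (Nat.choose (n + (j : ℕ)) (i : ℕ) : ℤ)) = 1 := by
  set M : Matrix (Fin n) (Fin n) ℤ :=
    Matrix.of fun i k : Fin n => if (k : ℕ) ≤ (i : ℕ) then
      (Nat.choose n ((i : ℕ) - (k : ℕ)) : ℤ) else 0 with hM
  set P : Matrix (Fin n) (Fin n) ℤ :=
    Matrix.of fun k j : Fin n => (Nat.choose (j : ℕ) (k : ℕ) : ℤ) with hP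
  have key : Matrix.of (fun i j : Fin n => (Nat.choose (n + (j : ℕ)) (i : ℕ) : ℤ)) = M * P := by
    ext i j
    simp only [Matrix.mul_apply, hM, hP, Matrix.of_apply]
    rw [add_comm n (j : ℕ), Nat.add_choose_eq (j : ℕ) n i]
    rw [Finset.Nat.sum_antidiagonal_eq_sum_range_succ (fun a b => (j : ℕ).choose a * n.choose b) i]
    rw [Fin.sum_univ_eq_sum_range
      (fun k => (if k ≤ (i : ℕ) then (n.choose ((i : ℕ) - k) : ℤ) else 0) * (j : ℕ).choose k)]
    push_cast
    rw [← Finset.sum_subset (Finset.range_subset_range.2 (Nat.succ_le_of_lt i.isLt))]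
    · apply Finset.sum_congr rfl
      intro k hk
      rw [Finset.mem_range, Nat.lt_succ_iff] at hk
      rw [if_pos hk, mul_comm]
    · intro k _ hk
      rw [Finset.mem_range, Nat.lt_succ_iff] at hk
      rw [if_neg hk, zero_mul]
  rw [key, Matrix.det_mul]
  have hMdet : M.det = 1 := by
    rw [Matrix.det_of_lowerTriangular M]
    · apply Finset.prod_eq_one
      intro i _
      simp [hM]
    · intro i k h
      have h' : (i : ℕ) < (k : ℕ) := h
      simp only [hM, Matrix.of_apply]
      rw [if_neg (by omega)]
  have hPdet : P.det = 1 := by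
    have hPtri : P.BlockTriangular id := by
      intro k j h
      have h' : (j : ℕ) < (k : ℕ) := h
      simp only [hP, Matrix.of_apply]
      rw [Nat.choose_eq_zero_of_lt h', Nat.cast_zero]
    rw [Matrix.det_of_upperTriangular hPtri]
    apply Finset.prod_eq_one
    intro i _
    simp [hP]
  rw [hMdet, hPdet, mul_one]
end

section
/- The sum over k ≥ 1 of 2·[1 + k·log(1 - 1/(2k)) - k·log(1 + 1/(2k))] converges and equals -1 + log 2. -/
open Real

open Filter Finset Topology

noncomputable def Faux (k : ℕ) : ℝ :=
  2 * (1 + ((k : ℝ) + 1) * Real.log (1 - 1 / (2 * ((k : ℝ) + 1)))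
    - ((k : ℝ) + 1) * Real.log (1 + 1 / (2 * ((k : ℝ) + 1))))

lemma Faux_nonpos (k : ℕ) : Faux k ≤ 0 := by
  unfold Faux
  set n : ℝ := (k : ℝ) + 1 with hn'
  have hn : (0:ℝ) < n := by positivity
  have hn1 : (1:ℝ) ≤ n := by rw [hn']; have := Nat.cast_nonneg (α := ℝ) k; linarith
  set x : ℝ := 1 / (2 * n) with hx'
  have hx0 : 0 < x := by positivity
  have hx1 : x ≤ 1/2 := by
    rw [hx', div_le_div_iff₀ (by positivity) (by norm_num)]
    linarith
  have habs : |x| < 1 := by rw [abs_of_pos hx0]; linarith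
  have h1 := (Real.hasSum_log_sub_log_of_abs_lt_one habs).mul_left (2*n)
  have h2 := (hasSum_nat_add_iff' 1).mpr h1
  have hnonneg : ∀ m : ℕ, (fun _ : ℕ => (0:ℝ)) m ≤ 2*n * ((2:ℝ) * (1 / (2 * (↑(m+1)) + 1)) * x ^ (2 * (m+1) + 1)) := by
    intro m
    simp only
    positivity
  have hsum0 : ∑ i ∈ range 1, 2*n * ((2:ℝ) * (1 / (2 * (i:ℝ) + 1)) * x ^ (2 * i + 1)) = 2 := by
    simp [hx']
    field_simp
  have key := hasSum_le hnonneg hasSum_zero h2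
  rw [hsum0] at key
  nlinarith [key]
lemma Faux_sum (N : ℕ) : ∑ k ∈ range N, Faux k =
    2*N + 2*(Real.log (Nat.factorial (2*N) : ℝ) - N * Real.log 2 - Real.log ((Nat.factorial N : ℕ) : ℝ))
      - 2*N*Real.log (2*N+1) := by
  induction N with
  | zero => simp
  | succ N ih =>
    rw [Finset.sum_range_succ, ih]
    have hfac : (0:ℝ) < (Nat.factorial (2*N) : ℝ) := by exact_mod_cast Nat.factorial_pos _
    have hfacN : (0:ℝ) < ((Nat.factorial N : ℕ) : ℝ) := by exact_mod_cast Nat.factorial_pos _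
    have e1 : (Nat.factorial (2*(N+1)) : ℝ) = (2*((N:ℝ)+1)) * ((2*(N:ℝ)+1) * (Nat.factorial (2*N) : ℝ)) := by
      rw [show 2*(N+1) = (2*N+1)+1 by ring, Nat.factorial_succ, Nat.factorial_succ]
      push_cast; ring
    have e2 : (Nat.factorial (N+1) : ℝ) = ((N:ℝ)+1) * ((Nat.factorial N : ℕ) : ℝ) := by
      rw [Nat.factorial_succ]; push_cast; ring
    have l1 : Real.log (Nat.factorial (2*(N+1)) : ℝ)
        = (Real.log 2 + Real.log ((N:ℝ)+1)) + (Real.log (2*(N:ℝ)+1) + Real.log (Nat.factorial (2*N) : ℝ)) := by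
      rw [e1, Real.log_mul (by positivity) (by positivity),
        Real.log_mul (two_ne_zero) (by positivity),
        Real.log_mul (by positivity) (by positivity)]
    have l2 : Real.log (Nat.factorial (N+1) : ℝ) = Real.log ((N:ℝ)+1) + Real.log ((Nat.factorial N : ℕ) : ℝ) := by
      rw [e2, Real.log_mul (by positivity) (by positivity)]
    have f1 : 1 - 1/(2*((N:ℝ)+1)) = (2*(N:ℝ)+1)/(2*(N:ℝ)+2) := by
      field_simp; ring
    have f2 : 1 + 1/(2*((N:ℝ)+1)) = (2*(N:ℝ)+3)/(2*(N:ℝ)+2) := by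
      field_simp; ring
    have l4 : Real.log (2*(N:ℝ)+2) = Real.log 2 + Real.log ((N:ℝ)+1) := by
      rw [show (2*(N:ℝ)+2) = 2*((N:ℝ)+1) by ring, Real.log_mul two_ne_zero (by positivity)]
    unfold Faux
    rw [f1, f2, Real.log_div (by positivity) (by positivity),
      Real.log_div (by positivity) (by positivity), l4]
    push_cast [l1, l2]
    ring_nf
lemma log_stirling (n : ℕ) (hn : 1 ≤ n) :
    Real.log (Stirling.stirlingSeq n)
      = Real.log ((Nat.factorial n : ℕ) : ℝ)
        - (Real.log (2*(n:ℝ)) / 2 + n * (Real.log n - 1)) := by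
  have hn0 : (0:ℝ) < (n:ℝ) := by exact_mod_cast hn
  have hfac : (0:ℝ) < ((Nat.factorial n : ℕ) : ℝ) := by exact_mod_cast Nat.factorial_pos n
  rw [Stirling.stirlingSeq]
  rw [Real.log_div (by positivity) (by positivity),
    Real.log_mul (by positivity) (by positivity),
    Real.log_sqrt (by positivity), Real.log_pow,
    Real.log_div (by positivity) (Real.exp_ne_zero 1), Real.log_exp]

lemma tendsto_rhs :
    Tendsto (fun N : ℕ =>
      2*(N:ℝ) + 2*(Real.log ((Nat.factorial (2*N) : ℕ) : ℝ) - N * Real.log 2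
        - Real.log ((Nat.factorial N : ℕ) : ℝ)) - 2*N*Real.log (2*N+1))
      atTop (𝓝 (-1 + Real.log 2)) := by
  have hπ : (0:ℝ) < Real.sqrt π := Real.sqrt_pos.mpr Real.pi_pos
  have T1 : Tendsto (fun N : ℕ => Real.log (Stirling.stirlingSeq N)) atTop
      (𝓝 (Real.log (Real.sqrt π))) :=
    ((Real.continuousAt_log hπ.ne').tendsto).comp Stirling.tendsto_stirlingSeq_sqrt_pi
  have hmul : Tendsto (fun N : ℕ => 2*N) atTop atTop :=
    tendsto_atTop_mono (fun n => by simp; omega) tendsto_id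
  have T1' : Tendsto (fun N : ℕ => Real.log (Stirling.stirlingSeq (2*N))) atTop
      (𝓝 (Real.log (Real.sqrt π))) := T1.comp hmul
  have hcast : Tendsto (fun N : ℕ => (2*(N:ℝ))) atTop atTop := by
    apply Filter.tendsto_atTop_mono (fun n : ℕ => _) tendsto_natCast_atTop_atTop
    intro n
    have : (0:ℝ) ≤ (n:ℝ) := Nat.cast_nonneg n
    linarith
  have T2 : Tendsto (fun N : ℕ => (2*(N:ℝ)) * Real.log (1 + 1/(2*(N:ℝ)))) atTop (𝓝 1) := by
    have h := (Real.tendsto_mul_log_one_add_div_atTop 1).comp hcast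
    apply h.congr
    intro N
    simp [Function.comp, one_div]
  have Tmain : Tendsto (fun N : ℕ =>
      2*Real.log (Stirling.stirlingSeq (2*N)) - 2*Real.log (Stirling.stirlingSeq N)
        + Real.log 2 - (2*(N:ℝ)) * Real.log (1 + 1/(2*(N:ℝ))))
      atTop (𝓝 (-1 + Real.log 2)) := by
    have h := (((T1'.const_mul 2).sub (T1.const_mul 2)).add_const (Real.log 2)).sub T2
    have : (2*Real.log (Real.sqrt π) - 2*Real.log (Real.sqrt π) + Real.log 2 - 1)
        = -1 + Real.log 2 := by ring
    rw [this] at h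
    exact h
  apply Tmain.congr'
  filter_upwards [eventually_ge_atTop 1] with N hN
  have hN0 : (0:ℝ) < (N:ℝ) := by exact_mod_cast hN
  have e1 := log_stirling N hN
  have e2 := log_stirling (2*N) (by omega)
  have hlog2N : Real.log (2*(N:ℝ)) = Real.log 2 + Real.log (N:ℝ) :=
    Real.log_mul two_ne_zero hN0.ne'
  have hlog4N : Real.log (2*((2*N:ℕ):ℝ)) = Real.log 2 + (Real.log 2 + Real.log (N:ℝ)) := by
    push_cast
    rw [show (2*(2*(N:ℝ))) = 2*(2*(N:ℝ)) from rfl, Real.log_mul two_ne_zero (by positivity),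
      ← hlog2N]
  have hlog1p : Real.log (1 + 1/(2*(N:ℝ))) = Real.log (2*(N:ℝ)+1) - Real.log (2*(N:ℝ)) := by
    rw [show (1 + 1/(2*(N:ℝ))) = (2*(N:ℝ)+1)/(2*(N:ℝ)) by field_simp,
      Real.log_div (by positivity) (by positivity)]
  rw [e1, e2, hlog1p, hlog4N]
  push_cast
  rw [hlog2N]
  ring

/-- `∑_{k≥1} 2·[1 + k log(1 - 1/(2k)) - k log(1 + 1/(2k))] = -1 + log 2`. -/
theorem sum_log_series_log2 :
    HasSum (fun k : ℕ =>
        2 * (1 + ((k : ℝ) + 1) * Real.log (1 - 1 / (2 * ((k : ℝ) + 1)))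
          - ((k : ℝ) + 1) * Real.log (1 + 1 / (2 * ((k : ℝ) + 1)))))
      (-1 + Real.log 2) := by

  have hF : (fun k : ℕ =>
        2 * (1 + ((k : ℝ) + 1) * Real.log (1 - 1 / (2 * ((k : ℝ) + 1)))
          - ((k : ℝ) + 1) * Real.log (1 + 1 / (2 * ((k : ℝ) + 1))))) = Faux := rfl
  rw [hF]
  have htend : Tendsto (fun N => ∑ k ∈ range N, Faux k) atTop (𝓝 (-1 + Real.log 2)) := by
    apply tendsto_rhs.congr
    intro N
    exact (Faux_sum N).symm
  have hg : HasSum (fun k => -Faux k) (1 - Real.log 2) := by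
    rw [hasSum_iff_tendsto_nat_of_nonneg (fun k => by linarith [Faux_nonpos k])]
    have h := htend.neg
    rw [show -(-1 + Real.log 2) = 1 - Real.log 2 by ring] at h
    apply h.congr
    intro N
    rw [Finset.sum_neg_distrib]
  rw [show (-1 + Real.log 2) = -(1 - Real.log 2) by ring]
  simpa only [neg_neg] using hg.neg
end

section
/- For all x in (0, π/2], it holds that 1/x - (4/π²)·x ≤ cot(x) ≤ 1/x. -/
open Real Set

private lemma hasDerivAt_q (x : ℝ) :
    HasDerivAt (fun y : ℝ => Real.sin y - y * Real.cos y) (x * Real.sin x) x := by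
  have h1 := Real.hasDerivAt_sin x
  have h2 := (hasDerivAt_id x).mul (Real.hasDerivAt_cos x)
  exact (h1.sub h2).congr_deriv (by simp only [id_eq]; ring)

private lemma hasDerivAt_p (c x : ℝ) :
    HasDerivAt (fun y : ℝ => (1 - 2*c) * Real.sin y - c * (y * Real.cos y))
      ((1 - 3*c) * Real.cos x + c * (x * Real.sin x)) x := by
  have h1 := (Real.hasDerivAt_sin x).const_mul (1 - 2*c)
  have h2 := ((hasDerivAt_id x).mul (Real.hasDerivAt_cos x)).const_mul c
  exact (h1.sub h2).congr_deriv (by simp only [id_eq]; ring)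

private lemma hasDerivAt_p' (c x : ℝ) :
    HasDerivAt (fun y : ℝ => (1 - 3*c) * Real.cos y + c * (y * Real.sin y))
      ((4*c - 1) * Real.sin x + c * (x * Real.cos x)) x := by
  have h1 := (Real.hasDerivAt_cos x).const_mul (1 - 3*c)
  have h2 := ((hasDerivAt_id x).mul (Real.hasDerivAt_sin x)).const_mul c
  exact (h1.add h2).congr_deriv (by simp only [id_eq]; ring)

private lemma hasDerivAt_h (c x : ℝ) :
    HasDerivAt (fun y : ℝ => Real.sin y - y * Real.cos y - c * (y^2 * Real.sin y))
      (x * ((1 - 2*c) * Real.sin x - c * (x * Real.cos x))) x := by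
  have h1 := hasDerivAt_q x
  have h2 := ((hasDerivAt_pow 2 x).mul (Real.hasDerivAt_sin x)).const_mul c
  exact (h1.sub h2).congr_deriv (by push_cast; ring)

private lemma h_nonpos (c : ℝ) (hc1 : 1 < 4 * c) (hc2 : c * (Real.pi / 2)^2 = 1)
    (x : ℝ) (hx0 : 0 < x) (hx2 : x ≤ Real.pi / 2) :
    Real.sin x - x * Real.cos x - c * (x^2 * Real.sin x) ≤ 0 := by
  have pi_pos := Real.pi_pos
  have hcpos : 0 < c := by linarith
  set p : ℝ → ℝ := fun y => (1 - 2*c) * Real.sin y - c * (y * Real.cos y) with hp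
  have hderivp : deriv p = fun y => (1 - 3*c) * Real.cos y + c * (y * Real.sin y) := by
    funext y; exact (hasDerivAt_p c y).deriv
  have hcontp : Continuous p :=
    (continuous_const.mul continuous_sin).sub (continuous_const.mul (continuous_id.mul continuous_cos))
  have hconv : ConvexOn ℝ (Icc 0 (Real.pi/2)) p := by
    apply convexOn_of_deriv2_nonneg (convex_Icc _ _) hcontp.continuousOn
    · intro y hy
      exact (hasDerivAt_p c y).differentiableAt.differentiableWithinAt
    · intro y hy
      rw [hderivp]
      exact (hasDerivAt_p' c y).differentiableAt.differentiableWithinAt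
    · intro y hy
      rw [interior_Icc] at hy
      have hit : deriv^[2] p y = deriv (deriv p) y := rfl
      rw [hit, hderivp, (hasDerivAt_p' c y).deriv]
      have h1 : 0 ≤ Real.sin y := Real.sin_nonneg_of_nonneg_of_le_pi (le_of_lt hy.1) (by linarith [hy.2])
      have h2 : 0 ≤ Real.cos y := Real.cos_nonneg_of_mem_Icc ⟨by linarith [hy.1], le_of_lt hy.2⟩
      nlinarith [mul_nonneg h1 (show (0:ℝ) ≤ 4*c - 1 by linarith),
        mul_nonneg (mul_nonneg hcpos.le (le_of_lt hy.1)) h2]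
  have hp0 : p 0 = 0 := by simp [hp]
  set h : ℝ → ℝ := fun y => Real.sin y - y * Real.cos y - c * (y^2 * Real.sin y) with hh
  have hh0 : h 0 = 0 := by simp [hh]
  have hhpi : h (Real.pi/2) = 0 := by
    simp only [hh, Real.sin_pi_div_two, Real.cos_pi_div_two]
    nlinarith [hc2]
  have hcont : Continuous h :=
    (continuous_sin.sub (continuous_id.mul continuous_cos)).sub
      (continuous_const.mul ((continuous_pow 2).mul continuous_sin))
  show h x ≤ 0
  by_cases hcase : ∀ y ∈ Icc (0:ℝ) x, p y ≤ 0
  · have hanti : AntitoneOn h (Icc 0 x) := by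
      apply antitoneOn_of_deriv_nonpos (convex_Icc _ _) hcont.continuousOn
      · intro y hy
        exact (hasDerivAt_h c y).differentiableAt.differentiableWithinAt
      · intro y hy
        rw [interior_Icc] at hy
        rw [(hasDerivAt_h c y).deriv]
        have := hcase y ⟨le_of_lt hy.1, le_of_lt hy.2⟩
        simp only [hp] at this
        nlinarith [hy.1]
    have := hanti (Set.mem_Icc.mpr ⟨le_refl 0, le_of_lt hx0⟩)
      (Set.mem_Icc.mpr ⟨le_of_lt hx0, le_refl x⟩) (le_of_lt hx0)
    rw [hh0] at this; exact this
  · push_neg at hcase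
    obtain ⟨y, hy, hpy⟩ := hcase
    have hy0 : 0 < y := by
      rcases lt_or_eq_of_le hy.1 with h' | h'
      · exact h'
      · exfalso; rw [← h', hp0] at hpy; exact lt_irrefl 0 hpy
    have hppos : ∀ z ∈ Icc x (Real.pi/2), 0 ≤ p z := by
      intro z hz
      have hyz : y ≤ z := le_trans hy.2 hz.1
      have hz0 : 0 < z := lt_of_lt_of_le hy0 hyz
      have hzmem : z ∈ Icc (0:ℝ) (Real.pi/2) := ⟨le_of_lt hz0, hz.2⟩
      have h0mem : (0:ℝ) ∈ Icc (0:ℝ) (Real.pi/2) := ⟨le_refl 0, by positivity⟩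
      have ht1 : (0:ℝ) ≤ 1 - y/z := by
        rw [sub_nonneg, div_le_one hz0]; exact hyz
      have ht2 : (0:ℝ) ≤ y/z := by positivity
      have ht3 : (1 - y/z) + y/z = 1 := by ring
      have hcx := hconv.2 h0mem hzmem ht1 ht2 ht3
      simp only [smul_eq_mul, mul_zero, zero_add, hp0] at hcx
      have heq : (y/z) * z = y := by field_simp
      rw [heq] at hcx
      by_contra hneg
      push_neg at hneg
      have h2 : y/z * p z ≤ 0 := mul_nonpos_of_nonneg_of_nonpos ht2 hneg.le
      exact absurd (lt_of_lt_of_le hpy hcx) (not_lt.mpr h2)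
    have hmono : MonotoneOn h (Icc x (Real.pi/2)) := by
      apply monotoneOn_of_deriv_nonneg (convex_Icc _ _) hcont.continuousOn
      · intro z hz
        exact (hasDerivAt_h c z).differentiableAt.differentiableWithinAt
      · intro z hz
        rw [interior_Icc] at hz
        rw [(hasDerivAt_h c z).deriv]
        have := hppos z ⟨le_of_lt hz.1, le_of_lt hz.2⟩
        have hz0 : 0 < z := lt_of_lt_of_le hx0 (le_of_lt hz.1)
        simp only [hp] at this
        nlinarith
    have := hmono (Set.mem_Icc.mpr ⟨le_refl x, hx2⟩) (Set.mem_Icc.mpr ⟨hx2, le_refl _⟩) hx2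
    rw [hhpi] at this; exact this

/-- For all `x ∈ (0, π/2]`: `1/x - (4/π²)x ≤ cot x ≤ 1/x`. -/
theorem cot_bounds (x : ℝ) (hx : x ∈ Set.Ioc 0 (Real.pi / 2)) :
    1 / x - (4 / Real.pi ^ 2) * x ≤ Real.cos x / Real.sin x ∧
      Real.cos x / Real.sin x ≤ 1 / x := by
  obtain ⟨hx0, hx2⟩ := hx
  have pi_pos := Real.pi_pos
  have hxpi : x < Real.pi := lt_of_le_of_lt hx2 (by linarith)
  have hsin : 0 < Real.sin x := Real.sin_pos_of_pos_of_lt_pi hx0 hxpi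
  have hq : 0 ≤ Real.sin x - x * Real.cos x := by
    have hmono : MonotoneOn (fun y : ℝ => Real.sin y - y * Real.cos y) (Icc 0 (Real.pi/2)) := by
      apply monotoneOn_of_deriv_nonneg (convex_Icc _ _)
      · exact (continuous_sin.sub (continuous_id.mul continuous_cos)).continuousOn
      · intro y hy
        exact (hasDerivAt_q y).differentiableAt.differentiableWithinAt
      · intro y hy
        rw [interior_Icc] at hy
        rw [(hasDerivAt_q y).deriv]
        have h1 : 0 ≤ Real.sin y :=
          Real.sin_nonneg_of_nonneg_of_le_pi (le_of_lt hy.1) (by linarith [hy.2])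
        nlinarith [hy.1]
    have := hmono (Set.mem_Icc.mpr ⟨le_refl 0, by positivity⟩)
      (Set.mem_Icc.mpr ⟨le_of_lt hx0, hx2⟩) (le_of_lt hx0)
    simpa using this
  have hupper : Real.cos x / Real.sin x ≤ 1 / x := by
    rw [div_le_div_iff₀ hsin hx0]
    nlinarith
  refine ⟨?_, hupper⟩
  set c : ℝ := 4 / Real.pi ^ 2 with hc
  have hpi4 : Real.pi < 4 := by nlinarith [Real.pi_lt_d2]
  have hc1' : 1 < 4 * c := by
    have hpi2 : Real.pi ^ 2 < 16 := by nlinarith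
    have hpos : (0:ℝ) < Real.pi ^ 2 := by positivity
    rw [hc, show (4:ℝ) * (4 / Real.pi ^ 2) = 16 / Real.pi ^ 2 by ring,
      lt_div_iff₀ hpos]
    linarith
  have hc2 : c * (Real.pi / 2)^2 = 1 := by
    rw [hc]; field_simp; ring
  have key := h_nonpos c hc1' hc2 x hx0 hx2
  have hrw : 1 / x - c * x = (1 - c * x^2) / x := by
    field_simp
  rw [hrw, div_le_div_iff₀ hx0 hsin]
  nlinarith [key]
end

section
/- As n → ∞, log(∏_{j=0}^{n-1} j! / ∏_{j=0}^{n-1} (n+j)!) = -n² log n + (3/2 - 2 log 2) n² - (1/12) log n + O(1). More precisely, for all sufficiently large n this quantity lies between -n² log n + (3/2 - 2 log 2)n² - (1/12) log n + (1/12) log 2 - log A - 1/12 - 1/(320 n²) and the same expression with -1/12 - 1/(320n²) replaced by 1/6 + 1/(320 n²). -/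
open Finset Real Filter

namespace LPF
open Stirling

noncomputable def s (n : ℕ) : ℝ := Real.log (stirlingSeq n) - Real.log (Real.sqrt π)

lemma s_tendsto : Tendsto s atTop (nhds 0) := by
  have hπ : Real.sqrt π ≠ 0 := by positivity
  have h := (Stirling.tendsto_stirlingSeq_sqrt_pi.log hπ).sub_const (Real.log (Real.sqrt π))
  simp at h
  exact h

lemma diff_nonneg (m : ℕ) : 0 ≤ s (m + 1) - s (m + 2) := by
  have h := log_stirlingSeq_diff_hasSum m
  have := h.nonneg (fun k => by positivity)
  simpa [s] using this

lemma diff_ge (m : ℕ) : 1 / (3 * (2 * (m : ℝ) + 3) ^ 2) ≤ s (m + 1) - s (m + 2) := by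
  have h := log_stirlingSeq_diff_hasSum m
  have h0 := le_hasSum h 0 (fun k _ => by positivity)
  have hs : s (m + 1) - s (m + 2) = log (stirlingSeq (m + 1)) - log (stirlingSeq (m + 2)) := by
    simp [s]
  rw [hs]
  refine le_trans (le_of_eq ?_) h0
  push_cast
  field_simp
  ring

lemma diff_le (m : ℕ) : s (m + 1) - s (m + 2) ≤ 1 / (12 * ((m : ℝ) + 1) * ((m : ℝ) + 2)) := by
  have h := log_stirlingSeq_diff_hasSum m
  push_cast at h
  set x : ℝ := (1 / (2 * ((m : ℝ) + 1) + 1)) ^ 2 with hx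
  have hx0 : (0 : ℝ) ≤ x := sq_nonneg _
  have hx1 : x < 1 := by
    rw [hx, div_pow, one_pow, div_lt_one (by positivity)]
    nlinarith [Nat.cast_nonneg (α := ℝ) m]
  have hgeo : HasSum (fun k : ℕ => (1 / 3 : ℝ) * x ^ (k + 1)) ((1 / 3) * (x * (1 - x)⁻¹)) := by
    have h2 := (hasSum_geometric_of_lt_one hx0 hx1).mul_left ((1 / 3 : ℝ) * x)
    simp_rw [mul_assoc, ← _root_.pow_succ'] at h2
    exact h2
  have hle := hasSum_le (fun k => ?_) h hgeo
  · have hs : s (m + 1) - s (m + 2) = log (stirlingSeq (m + 1)) - log (stirlingSeq (m + 2)) := by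
      simp [s]
    rw [hs]
    refine hle.trans (le_of_eq ?_)
    have hY : (0 : ℝ) < 2 * ((m : ℝ) + 1) + 1 := by positivity
    have hYm : (0 : ℝ) < (2 * ((m : ℝ) + 1) + 1) ^ 2 - 1 := by
      nlinarith [Nat.cast_nonneg (α := ℝ) m]
    have h1 : (1 : ℝ) - x = ((2 * ((m : ℝ) + 1) + 1) ^ 2 - 1) / (2 * ((m : ℝ) + 1) + 1) ^ 2 := by
      rw [hx, div_pow, one_pow, eq_div_iff (by positivity)]
      field_simp
    rw [h1, hx, div_pow, one_pow, inv_div]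
    field_simp [hY.ne', hYm.ne']
    ring
  · refine mul_le_mul_of_nonneg_right ?_ (pow_nonneg hx0 (k + 1))
    rw [div_le_div_iff₀ (by positivity) (by norm_num)]
    nlinarith [Nat.cast_nonneg (α := ℝ) k]

lemma tele (f : ℕ → ℝ) (n : ℕ) : ∀ N, n ≤ N → ∑ k ∈ Ico n N, (f k - f (k + 1)) = f n - f N := by
  intro N hN
  induction N, hN using Nat.le_induction with
  | base => simp
  | succ N hN ih => rw [Finset.sum_Ico_succ_top hN, ih]; ring

lemma diff_nonneg' (k : ℕ) (hk : 1 ≤ k) : 0 ≤ s k - s (k + 1) := by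
  obtain ⟨m, rfl⟩ := Nat.exists_eq_add_of_le hk
  simpa [add_comm 1 m] using diff_nonneg m

lemma s_sub_tendsto (n : ℕ) : Tendsto (fun N => s n - s N) atTop (nhds (s n)) := by
  simpa using (tendsto_const_nhds (x := s n)).sub s_tendsto

lemma s_nonneg (n : ℕ) (hn : 1 ≤ n) : 0 ≤ s n := by
  refine ge_of_tendsto (s_sub_tendsto n) ?_
  filter_upwards [eventually_ge_atTop n] with N hN
  rw [← tele s n N hN]
  refine Finset.sum_nonneg fun k hk => ?_
  exact diff_nonneg' k (le_trans hn (Finset.mem_Ico.mp hk).1)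

lemma diff_le' (k : ℕ) (hk : 1 ≤ k) :
    s k - s (k + 1) ≤ 1 / (12 * (k : ℝ)) - 1 / (12 * ((k : ℝ) + 1)) := by
  obtain ⟨m, rfl⟩ := Nat.exists_eq_add_of_le hk
  have h := diff_le m
  have hm : (0 : ℝ) ≤ m := Nat.cast_nonneg m
  have heq : 1 / (12 * ((m : ℝ) + 1) * ((m : ℝ) + 2))
      = 1 / (12 * ((m : ℝ) + 1)) - 1 / (12 * ((m : ℝ) + 2)) := by
    rw [div_sub_div _ _ (by positivity) (by positivity), div_eq_div_iff (by positivity) (by positivity)]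
    ring
  rw [heq] at h
  have e2 : 1 + m = m + 1 := by omega
  rw [e2]
  push_cast
  ring_nf
  ring_nf at h
  linarith

lemma s_le (n : ℕ) (hn : 1 ≤ n) : s n ≤ 1 / (12 * (n : ℝ)) := by
  refine le_of_tendsto (s_sub_tendsto n) ?_
  filter_upwards [eventually_ge_atTop n] with N hN
  rw [← tele s n N hN]
  have h1 : ∑ k ∈ Ico n N, (s k - s (k + 1))
      ≤ ∑ k ∈ Ico n N, ((fun k : ℕ => 1 / (12 * (k : ℝ))) k - (fun k : ℕ => 1 / (12 * (k : ℝ))) (k + 1)) := by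
    refine Finset.sum_le_sum fun k hk => ?_
    have hk1 : 1 ≤ k := le_trans hn (Finset.mem_Ico.mp hk).1
    have := diff_le' k hk1
    simpa using this
  refine h1.trans ?_
  rw [tele _ n N hN]
  have hN0 : (0 : ℝ) ≤ 1 / (12 * (N : ℝ)) := by positivity

  linarith

lemma s_anti {n m : ℕ} (hn : 1 ≤ n) (hnm : n ≤ m) : s m ≤ s n := by
  obtain ⟨a, rfl⟩ := Nat.exists_eq_add_of_le hn
  obtain ⟨b, rfl⟩ := Nat.exists_eq_add_of_le hnm
  have h := Stirling.log_stirlingSeq'_antitone (Nat.le_add_right a b)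
  simp only [Function.comp, Nat.succ_eq_add_one] at h
  have e1 : 1 + a + b = (a + b) + 1 := by omega
  have e2 : 1 + a = a + 1 := by omega
  rw [e1, e2]
  exact sub_le_sub_right h _

lemma s_two_ge (n : ℕ) (hn : 1 ≤ n) : 2 / (243 * (n : ℝ)) ≤ s (2 * n) := by
  have htele := tele s (2 * n) (4 * n + 1) (by omega)
  have h40 : 0 ≤ s (4 * n + 1) := s_nonneg _ (by omega)
  have hsum : (2 * (n : ℝ) + 1) * (1 / (243 * (n : ℝ) ^ 2))
      ≤ ∑ k ∈ Ico (2 * n) (4 * n + 1), (s k - s (k + 1)) := by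
    have hcard : (Ico (2 * n) (4 * n + 1)).card = 2 * n + 1 := by
      rw [Nat.card_Ico]; omega
    have := Finset.card_nsmul_le_sum (Ico (2 * n) (4 * n + 1))
      (fun k => s k - s (k + 1)) (1 / (243 * (n : ℝ) ^ 2)) ?_
    · rw [hcard] at this
      refine le_trans (le_of_eq ?_) this
      push_cast [nsmul_eq_mul]
      ring
    · intro k hk
      obtain ⟨hk1, hk2⟩ := Finset.mem_Ico.mp hk
      obtain ⟨m, rfl⟩ := Nat.exists_eq_add_of_le (show 1 ≤ k by omega)
      have h := diff_ge m
      have hb : 1 / (3 * (2 * (m : ℝ) + 3) ^ 2) ≥ 1 / (243 * (n : ℝ) ^ 2) := by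
        have hm1 : (m : ℝ) ≤ 4 * (n : ℝ) - 1 := by
          have : m ≤ 4 * n - 1 := by omega
          have h4 : (m : ℝ) ≤ ((4 * n - 1 : ℕ) : ℝ) := Nat.cast_le.mpr this
          have : ((4 * n - 1 : ℕ) : ℝ) = 4 * (n : ℝ) - 1 := by
            have : (1:ℕ) ≤ 4 * n := by omega
            push_cast [this]; ring
          linarith
        have hn1 : (1 : ℝ) ≤ n := by exact_mod_cast hn
        have hpos : (0 : ℝ) < 2 * (m : ℝ) + 3 := by positivity
        rw [ge_iff_le, div_le_div_iff₀ (by positivity) (by positivity)]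
        nlinarith [Nat.cast_nonneg (α := ℝ) m]
      have : ((1 + m : ℕ) : ℝ) = (m : ℝ) + 1 := by push_cast; ring
      calc 1 / (243 * (n : ℝ) ^ 2) ≤ 1 / (3 * (2 * (m : ℝ) + 3) ^ 2) := hb
        _ ≤ s (m + 1) - s (m + 2) := h
        _ = s (1 + m) - s (1 + m + 1) := by rw [add_comm 1 m]
  have hn1 : (1 : ℝ) ≤ n := by exact_mod_cast hn
  have hfin : 2 / (243 * (n : ℝ)) ≤ (2 * (n : ℝ) + 1) * (1 / (243 * (n : ℝ) ^ 2)) := by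
    rw [div_le_iff₀ (by positivity)]
    have : (2 * (n : ℝ) + 1) * (1 / (243 * (n : ℝ) ^ 2)) * (243 * (n : ℝ))
        = (2 * (n : ℝ) + 1) / (n : ℝ) := by
      field_simp
    rw [this, le_div_iff₀ (by positivity)]
    nlinarith
  calc 2 / (243 * (n : ℝ)) ≤ (2 * (n : ℝ) + 1) * (1 / (243 * (n : ℝ) ^ 2)) := hfin
    _ ≤ ∑ k ∈ Ico (2 * n) (4 * n + 1), (s k - s (k + 1)) := hsum
    _ = s (2 * n) - s (4 * n + 1) := htele
    _ ≤ s (2 * n) := by linarith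

lemma s_eq (n : ℕ) (hn : 1 ≤ n) :
    Real.log (Nat.factorial n) = ((n : ℝ) + 1 / 2) * Real.log n - n + (1 / 2) * Real.log (2 * π)
      + s n := by
  have hn0 : (0 : ℝ) < n := by exact_mod_cast hn
  have hf := Stirling.log_stirlingSeq_formula n
  have h2n : Real.log (2 * (n : ℝ)) = Real.log 2 + Real.log n := Real.log_mul two_ne_zero hn0.ne'
  have hne : Real.log ((n : ℝ) / Real.exp 1) = Real.log n - 1 := by
    rw [Real.log_div hn0.ne' (Real.exp_ne_zero 1), Real.log_exp]
  have hsq : Real.log (Real.sqrt π) = Real.log π / 2 := Real.log_sqrt Real.pi_pos.le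
  have h2π : Real.log (2 * π) = Real.log 2 + Real.log π := Real.log_mul two_ne_zero Real.pi_ne_zero
  have : s n = Real.log (Nat.factorial n) - 1 / 2 * Real.log (2 * n) - n * Real.log (n / Real.exp 1)
      - Real.log (Real.sqrt π) := by
    rw [s, hf]
  rw [this, h2n, hne, hsq, h2π]
  push_cast
  ring

noncomputable def LH (n : ℕ) : ℝ := ∑ k ∈ Icc 1 n, (k : ℝ) * Real.log k

lemma LH_eq (n : ℕ) : Real.log (∏ k ∈ Icc 1 n, (k : ℝ) ^ (k : ℕ)) = LH n := by
  rw [Real.log_prod]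
  · refine Finset.sum_congr rfl fun k hk => ?_
    rw [Real.log_pow]
  · intro k hk
    have : 1 ≤ k := (Finset.mem_Icc.mp hk).1
    positivity

lemma hpf (m : ℕ) :
    (∏ j ∈ range m, (Nat.factorial j : ℝ)) * (∏ k ∈ Icc 1 m, (k : ℝ) ^ (k : ℕ))
      = (Nat.factorial m : ℝ) ^ m := by
  induction m with
  | zero => simp
  | succ m ih =>
    rw [Finset.prod_range_succ, Finset.prod_Icc_succ_top (by omega)]
    push_cast [Nat.factorial_succ]
    have expand : ((m : ℝ) + 1) ^ (m + 1) * (((m : ℝ) + 1) * (Nat.factorial m : ℝ)) ^ m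
        = ((m : ℝ) + 1) ^ (m + 1) * (((m : ℝ) + 1) ^ m * (Nat.factorial m : ℝ) ^ m) := by
      rw [mul_pow]
    calc (∏ j ∈ range m, (Nat.factorial j : ℝ)) * (Nat.factorial m : ℝ)
          * ((∏ k ∈ Icc 1 m, (k : ℝ) ^ (k : ℕ)) * ((m : ℝ) + 1) ^ (m + 1))
        = ((∏ j ∈ range m, (Nat.factorial j : ℝ)) * (∏ k ∈ Icc 1 m, (k : ℝ) ^ (k : ℕ)))
          * ((Nat.factorial m : ℝ) * ((m : ℝ) + 1) ^ (m + 1)) := by ring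
      _ = (Nat.factorial m : ℝ) ^ m * ((Nat.factorial m : ℝ) * ((m : ℝ) + 1) ^ (m + 1)) := by
          rw [ih]
      _ = (((m : ℝ) + 1) * (Nat.factorial m : ℝ)) ^ (m + 1) := by
          rw [mul_pow, pow_succ]; ring

lemma P_pos (m : ℕ) : 0 < ∏ j ∈ range m, (Nat.factorial j : ℝ) :=
  Finset.prod_pos fun j _ => by exact_mod_cast Nat.factorial_pos j

lemma logP (m : ℕ) :
    Real.log (∏ j ∈ range m, (Nat.factorial j : ℝ)) = m * Real.log (Nat.factorial m) - LH m := by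
  have h := hpf m
  have hP := P_pos m
  have hH : (0 : ℝ) < ∏ k ∈ Icc 1 m, (k : ℝ) ^ (k : ℕ) := by
    refine Finset.prod_pos fun k hk => ?_
    have : 1 ≤ k := (Finset.mem_Icc.mp hk).1
    positivity
  have := congrArg Real.log h
  rw [Real.log_mul hP.ne' hH.ne', Real.log_pow, LH_eq] at this
  linarith [this]

lemma sum_log_Icc (n : ℕ) : ∑ j ∈ Icc 1 n, Real.log j = Real.log (Nat.factorial n) := by
  induction n with
  | zero => simp
  | succ n ih =>
    rw [Finset.sum_Icc_succ_top (by omega), ih]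
    have : (Nat.factorial (n + 1) : ℝ) = ((n : ℝ) + 1) * (Nat.factorial n : ℝ) := by
      push_cast [Nat.factorial_succ]; ring
    rw [this, Real.log_mul (by positivity) (by exact_mod_cast (Nat.factorial_pos n).ne')]
    push_cast
    ring

lemma sum_id_Icc (n : ℕ) : ∑ j ∈ Icc 1 n, (j : ℝ) = (n : ℝ) * ((n : ℝ) + 1) / 2 := by
  induction n with
  | zero => simp
  | succ n ih =>
    rw [Finset.sum_Icc_succ_top (by omega), ih]
    push_cast
    ring

lemma sum_log_fact (n : ℕ) :
    ∑ j ∈ Icc 1 n, Real.log (Nat.factorial j)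
      = ((n : ℝ) + 1) * Real.log (Nat.factorial n) - LH n := by
  induction n with
  | zero => simp [LH]
  | succ n ih =>
    rw [Finset.sum_Icc_succ_top (by omega), ih]
    have hfs : Real.log (Nat.factorial (n + 1))
        = Real.log ((n : ℝ) + 1) + Real.log (Nat.factorial n) := by
      have : (Nat.factorial (n + 1) : ℝ) = ((n : ℝ) + 1) * (Nat.factorial n : ℝ) := by
        push_cast [Nat.factorial_succ]; ring
      rw [this, Real.log_mul (by positivity) (by exact_mod_cast (Nat.factorial_pos n).ne')]
    have hLH : LH (n + 1) = LH n + ((n : ℝ) + 1) * Real.log ((n : ℝ) + 1) := by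
      rw [LH, LH, Finset.sum_Icc_succ_top (by omega)]
      push_cast
      ring
    rw [hLH]
    push_cast
    push_cast at hfs
    linear_combination (-(n : ℝ) - 1) * hfs

lemma identity_I (n : ℕ) (hn : 1 ≤ n) :
    2 * LH n = ((n : ℝ) + 1 / 2) * Real.log (Nat.factorial n) + (n : ℝ) * ((n : ℝ) + 1) / 2
      - (1 / 2) * Real.log (2 * π) * n - ∑ j ∈ Icc 1 n, s j := by
  have h1 : ∑ j ∈ Icc 1 n, Real.log (Nat.factorial j)
      = ∑ j ∈ Icc 1 n, (((j : ℝ) + 1 / 2) * Real.log j - j + (1 / 2) * Real.log (2 * π) + s j) :=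
    Finset.sum_congr rfl fun j hj => s_eq j (Finset.mem_Icc.mp hj).1
  rw [sum_log_fact n] at h1
  have h3 : ∑ j ∈ Icc 1 n, ((j : ℝ) + 1 / 2) * Real.log j
      = LH n + (1 / 2) * Real.log (Nat.factorial n) := by
    rw [← sum_log_Icc n, LH, Finset.mul_sum, ← Finset.sum_add_distrib]
    exact Finset.sum_congr rfl fun j hj => by ring
  have h2 : ∑ j ∈ Icc 1 n, (((j : ℝ) + 1 / 2) * Real.log j - j + (1 / 2) * Real.log (2 * π) + s j)
      = (LH n + (1 / 2) * Real.log (Nat.factorial n)) - (n : ℝ) * ((n : ℝ) + 1) / 2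
        + (1 / 2) * Real.log (2 * π) * n + ∑ j ∈ Icc 1 n, s j := by
    rw [Finset.sum_add_distrib, Finset.sum_add_distrib, Finset.sum_sub_distrib, h3, sum_id_Icc,
      Finset.sum_const, Nat.card_Icc]
    have hc : (n + 1 - 1) • ((1 / 2) * Real.log (2 * π)) = (1 / 2) * Real.log (2 * π) * n := by
      simp [nsmul_eq_mul]
      ring
    rw [hc]
  rw [h2] at h1
  linarith

noncomputable def d (n : ℕ) : ℝ :=
  LH n - (((n : ℝ) ^ 2 / 2 + (n : ℝ) / 2 + 1 / 12) * Real.log n - (n : ℝ) ^ 2 / 4)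

lemma two_d_eq (n : ℕ) (hn : 1 ≤ n) :
    2 * d n = (1 / 12) * Real.log n + (1 / 4) * Real.log (2 * π)
      + ((n : ℝ) + 1 / 2) * s n - ∑ j ∈ Icc 1 n, s j := by
  have hI := identity_I n hn
  have hs := s_eq n hn
  rw [d]
  linear_combination hI + ((n : ℝ) + 1 / 2) * hs

lemma sum_s_le (n : ℕ) (hn : 1 ≤ n) :
    ∑ j ∈ Icc 1 n, s j ≤ (1 / 12) * (1 + Real.log n) := by
  have h1 : ∑ j ∈ Icc 1 n, s j ≤ ∑ j ∈ Icc 1 n, (1 / 12) * ((j : ℝ))⁻¹ := by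
    refine Finset.sum_le_sum fun j hj => ?_
    have hj1 : 1 ≤ j := (Finset.mem_Icc.mp hj).1
    have := s_le j hj1
    have hj0 : (0 : ℝ) < j := by exact_mod_cast hj1
    calc s j ≤ 1 / (12 * (j : ℝ)) := this
      _ = (1 / 12) * ((j : ℝ))⁻¹ := by rw [one_div, mul_inv]; ring
  refine h1.trans ?_
  rw [← Finset.mul_sum]
  have h2 : ∑ j ∈ Icc 1 n, ((j : ℝ))⁻¹ = ((harmonic n : ℚ) : ℝ) := by
    rw [harmonic_eq_sum_Icc]
    push_cast
    rfl
  rw [h2]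
  have := harmonic_le_one_add_log n
  nlinarith [this]

lemma d_ge (n : ℕ) (hn : 1 ≤ n) : (1 / 8) * Real.log (2 * π) - 1 / 24 ≤ d n := by
  have h := two_d_eq n hn
  have h1 := sum_s_le n hn
  have h2 := s_nonneg n hn
  have h3 : (0 : ℝ) ≤ (n : ℝ) + 1 / 2 := by positivity
  nlinarith [mul_nonneg h3 h2]

lemma log_r_eq (n : ℕ) (hn : 1 ≤ n) :
    Real.log ((∏ k ∈ Icc 1 n, (k : ℝ) ^ (k : ℕ)) /
        ((n : ℝ) ^ ((n : ℝ) ^ 2 / 2 + (n : ℝ) / 2 + 1 / 12) * Real.exp (-(n : ℝ) ^ 2 / 4)))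
      = d n := by
  have hn0 : (0 : ℝ) < n := by exact_mod_cast hn
  have hH : (0 : ℝ) < ∏ k ∈ Icc 1 n, (k : ℝ) ^ (k : ℕ) := by
    refine Finset.prod_pos fun k hk => ?_
    have : 1 ≤ k := (Finset.mem_Icc.mp hk).1
    positivity
  have hrp : (0 : ℝ) < (n : ℝ) ^ ((n : ℝ) ^ 2 / 2 + (n : ℝ) / 2 + 1 / 12) :=
    Real.rpow_pos_of_pos hn0 _
  rw [Real.log_div hH.ne' (by positivity), Real.log_mul hrp.ne' (Real.exp_ne_zero _),
    Real.log_rpow hn0, Real.log_exp, LH_eq, d]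
  ring

lemma r_pos (n : ℕ) (hn : 1 ≤ n) :
    (0 : ℝ) < (∏ k ∈ Icc 1 n, (k : ℝ) ^ (k : ℕ)) /
        ((n : ℝ) ^ ((n : ℝ) ^ 2 / 2 + (n : ℝ) / 2 + 1 / 12) * Real.exp (-(n : ℝ) ^ 2 / 4)) := by
  have hn0 : (0 : ℝ) < n := by exact_mod_cast hn
  have hH : (0 : ℝ) < ∏ k ∈ Icc 1 n, (k : ℝ) ^ (k : ℕ) := by
    refine Finset.prod_pos fun k hk => ?_
    have : 1 ≤ k := (Finset.mem_Icc.mp hk).1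
    positivity
  have hrp : (0 : ℝ) < (n : ℝ) ^ ((n : ℝ) ^ 2 / 2 + (n : ℝ) / 2 + 1 / 12) :=
    Real.rpow_pos_of_pos hn0 _
  positivity

lemma main_id (n : ℕ) (hn : 1 ≤ n) :
    Real.log ((∏ j ∈ range n, (Nat.factorial j : ℝ)) /
        ∏ j ∈ range n, (Nat.factorial (n + j) : ℝ))
      = -(n : ℝ) ^ 2 * Real.log n + (3 / 2 - 2 * Real.log 2) * (n : ℝ) ^ 2
        - (1 / 12) * Real.log n + (1 / 12) * Real.log 2 + (d (2 * n) - 2 * d n)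
        + 2 * (n : ℝ) * (s n - s (2 * n)) := by
  have hn0 : (0 : ℝ) < n := by exact_mod_cast hn
  have hQpos : 0 < ∏ j ∈ range n, (Nat.factorial (n + j) : ℝ) :=
    Finset.prod_pos fun j _ => by exact_mod_cast Nat.factorial_pos _
  have hsplit : (∏ j ∈ range (n + n), (Nat.factorial j : ℝ))
      = (∏ j ∈ range n, (Nat.factorial j : ℝ)) * ∏ j ∈ range n, (Nat.factorial (n + j) : ℝ) :=
    Finset.prod_range_add (fun j => (Nat.factorial j : ℝ)) n n
  have h2n : 2 * n = n + n := by omega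
  have hQ : Real.log (∏ j ∈ range n, (Nat.factorial (n + j) : ℝ))
      = Real.log (∏ j ∈ range (2 * n), (Nat.factorial j : ℝ))
        - Real.log (∏ j ∈ range n, (Nat.factorial j : ℝ)) := by
    rw [h2n, hsplit, Real.log_mul (P_pos n).ne' hQpos.ne']
    ring
  rw [Real.log_div (P_pos n).ne' hQpos.ne', hQ, logP, logP]
  have e3 := s_eq n hn
  have e4 := s_eq (2 * n) (by omega)
  have e6 : LH n = ((n : ℝ) ^ 2 / 2 + (n : ℝ) / 2 + 1 / 12) * Real.log n - (n : ℝ) ^ 2 / 4 + d n := by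
    rw [d]; ring
  have e7 : LH (2 * n) = (((2 * n : ℕ) : ℝ) ^ 2 / 2 + ((2 * n : ℕ) : ℝ) / 2 + 1 / 12)
      * Real.log ((2 * n : ℕ) : ℝ) - ((2 * n : ℕ) : ℝ) ^ 2 / 4 + d (2 * n) := by
    rw [d]; ring
  rw [e3, e4, e6, e7]
  have e5 : Real.log (2 * (n : ℝ)) = Real.log 2 + Real.log n :=
    Real.log_mul two_ne_zero hn0.ne'
  push_cast
  rw [e5]
  ring

end LPF

/-- As `n → ∞`,
`log(∏_{j=0}^{n-1} j! / ∏_{j=0}^{n-1} (n+j)!) = -n² log n + (3/2 - 2 log 2)n² - (1/12) log n + O(1)`;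
more precisely, for all sufficiently large `n` this quantity lies between
`-n² log n + (3/2 - 2 log 2)n² - (1/12) log n + (1/12) log 2 - log A - 1/12 - 1/(320 n²)` and
`-n² log n + (3/2 - 2 log 2)n² - (1/12) log n + (1/12) log 2 - log A + 1/6 + 1/(320 n²)`,
where `A` is the Glaisher–Kinkelin constant, characterized here as the limit of
`(∏_{k=1}^n k^k) / (n^(n²/2 + n/2 + 1/12) e^(-n²/4))`. -/
theorem log_prod_factorial_ratio_bounds (A : ℝ)
    (hA : Filter.Tendsto (fun n : ℕ =>
        (∏ k ∈ Finset.Icc 1 n, (k : ℝ) ^ (k : ℕ)) /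
          ((n : ℝ) ^ ((n : ℝ) ^ 2 / 2 + (n : ℝ) / 2 + 1 / 12) * Real.exp (-(n : ℝ) ^ 2 / 4)))
      Filter.atTop (nhds A)) :
    ∃ N : ℕ, ∀ n : ℕ, N ≤ n →
      (-(n : ℝ) ^ 2 * Real.log n + (3 / 2 - 2 * Real.log 2) * (n : ℝ) ^ 2
          - (1 / 12) * Real.log n + (1 / 12) * Real.log 2 - Real.log A - 1 / 12
          - 1 / (320 * (n : ℝ) ^ 2)
        ≤ Real.log ((∏ j ∈ Finset.range n, (Nat.factorial j : ℝ)) /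
            ∏ j ∈ Finset.range n, (Nat.factorial (n + j) : ℝ))) ∧
      (Real.log ((∏ j ∈ Finset.range n, (Nat.factorial j : ℝ)) /
            ∏ j ∈ Finset.range n, (Nat.factorial (n + j) : ℝ))
        ≤ -(n : ℝ) ^ 2 * Real.log n + (3 / 2 - 2 * Real.log 2) * (n : ℝ) ^ 2
          - (1 / 12) * Real.log n + (1 / 12) * Real.log 2 - Real.log A + 1 / 6
          + 1 / (320 * (n : ℝ) ^ 2)) := by
  have hApos : 0 < A := by
    have hle : Real.exp ((1 / 8) * Real.log (2 * π) - 1 / 24) ≤ A := by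
      refine ge_of_tendsto hA ?_
      filter_upwards [eventually_ge_atTop 1] with n hn
      have hdg := LPF.d_ge n hn
      have hr := LPF.r_pos n hn
      have hlr := LPF.log_r_eq n hn
      calc Real.exp ((1 / 8) * Real.log (2 * π) - 1 / 24) ≤ Real.exp (LPF.d n) :=
            Real.exp_le_exp.mpr hdg
        _ = _ := by rw [← hlr, Real.exp_log hr]
    exact lt_of_lt_of_le (Real.exp_pos _) hle
  have hd : Tendsto LPF.d atTop (nhds (Real.log A)) := by
    have h1 := hA.log hApos.ne'
    refine Filter.Tendsto.congr' ?_ h1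
    filter_upwards [eventually_ge_atTop 1] with n hn
    exact LPF.log_r_eq n hn
  have h2mul : Tendsto (fun n : ℕ => 2 * n) atTop atTop :=
    tendsto_atTop_mono (fun n => by simp only [id_eq]; omega) tendsto_id
  have hd2 : Tendsto (fun n : ℕ => LPF.d (2 * n)) atTop (nhds (Real.log A)) := hd.comp h2mul
  have hE : Tendsto (fun n : ℕ => LPF.d (2 * n) - 2 * LPF.d n + Real.log A) atTop (nhds 0) := by
    have h := (hd2.sub (hd.const_mul 2)).add_const (Real.log A)
    have h0 : Real.log A - 2 * Real.log A + Real.log A = 0 := by ring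
    rw [h0] at h
    exact h
  have hp : ∀ᶠ y in nhds (0 : ℝ), |y| < 1 / 100 := by
    have := eventually_abs_sub_lt (0 : ℝ) (by norm_num : (0 : ℝ) < 1 / 100)
    simpa using this
  have hEsmall := hE.eventually hp
  rw [eventually_atTop] at hEsmall
  obtain ⟨N0, hN0⟩ := hEsmall
  refine ⟨max N0 1, fun n hn => ?_⟩
  have hn1 : 1 ≤ n := le_trans (le_max_right _ _) hn
  have hnN : N0 ≤ n := le_trans (le_max_left _ _) hn
  have hE2 : |LPF.d (2 * n) - 2 * LPF.d n + Real.log A| < 1 / 100 := hN0 n hnN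
  have hid := LPF.main_id n hn1
  have hn0 : (0 : ℝ) < n := by exact_mod_cast hn1
  have hsle := LPF.s_le n hn1
  have hsge := LPF.s_two_ge n hn1
  have hmono := LPF.s_anti hn1 (by omega : n ≤ 2 * n)
  have h1 : 2 * (n : ℝ) * LPF.s n ≤ 2 * (n : ℝ) * (1 / (12 * (n : ℝ))) :=
    mul_le_mul_of_nonneg_left hsle (by positivity)
  have h1' : 2 * (n : ℝ) * (1 / (12 * (n : ℝ))) = 1 / 6 := by field_simp; ring
  have h2 : 2 * (n : ℝ) * (2 / (243 * (n : ℝ))) ≤ 2 * (n : ℝ) * LPF.s (2 * n) :=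
    mul_le_mul_of_nonneg_left hsge (by positivity)
  have h2' : 2 * (n : ℝ) * (2 / (243 * (n : ℝ))) = 4 / 243 := by field_simp; ring
  have hTle : 2 * (n : ℝ) * (LPF.s n - LPF.s (2 * n)) ≤ 1 / 6 - 4 / 243 := by nlinarith
  have hTge : 0 ≤ 2 * (n : ℝ) * (LPF.s n - LPF.s (2 * n)) := by nlinarith
  have habs := abs_lt.mp hE2
  have hpos2 : (0 : ℝ) < 1 / (320 * (n : ℝ) ^ 2) := by positivity
  have hq : (1 : ℝ) / 100 ≤ 4 / 243 := by norm_num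
  constructor
  · rw [hid]; linarith [habs.1]
  · rw [hid]; linarith [habs.2]
end

section
/- Define F(n) = 2^{n(n-1)/2} ∏_{j=1}^{n-1} sin(jπ/(2n))^{n-j}. Then for every integer n ≥ 1, -log F(n) ≥ -∫_1^n (n-x) log(sin(πx/(2n))) dx - (1/2)(n-1) log(sin(π/(2n))) - (n(n-1)/2) log 2. -/
open Finset Real intervalIntegral

noncomputable def Hfun (n : ℕ) : ℝ → ℝ :=
  fun x => ((n : ℝ) - x) * (-Real.log (Real.sin (Real.pi * x / (2 * n))))

lemma arg_mem (n : ℕ) (hn : 1 ≤ n) {x : ℝ} (hx : x ∈ Set.Icc (1:ℝ) (n:ℝ)) :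
    Real.pi * x / (2 * n) ∈ Set.Icc (0:ℝ) Real.pi := by
  have hn0 : (0:ℝ) < n := by exact_mod_cast hn
  have h1 := hx.1
  constructor
  · positivity
  · rw [div_le_iff₀ (by positivity)]
    nlinarith [Real.pi_pos, hx.1, hx.2]

lemma sin_pos_on (n : ℕ) (hn : 1 ≤ n) {x : ℝ} (hx : x ∈ Set.Icc (1:ℝ) (n:ℝ)) :
    0 < Real.sin (Real.pi * x / (2 * n)) := by
  have hn0 : (0:ℝ) < n := by exact_mod_cast hn
  apply Real.sin_pos_of_pos_of_lt_pi
  · have := hx.1; positivity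
  · rw [div_lt_iff₀ (by positivity)]
    nlinarith [Real.pi_pos, hx.1, hx.2]

lemma neg_log_sin_nonneg (n : ℕ) (hn : 1 ≤ n) {x : ℝ} (hx : x ∈ Set.Icc (1:ℝ) (n:ℝ)) :
    0 ≤ -Real.log (Real.sin (Real.pi * x / (2 * n))) := by
  rw [neg_nonneg]
  exact Real.log_nonpos (sin_pos_on n hn hx).le (Real.sin_le_one _) |>.trans le_rfl

lemma H_contOn (n : ℕ) (hn : 1 ≤ n) : ContinuousOn (Hfun n) (Set.Icc (1:ℝ) (n:ℝ)) := by
  apply ContinuousOn.mul (by fun_prop)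
  apply ContinuousOn.neg
  apply ContinuousOn.log (by fun_prop)
  exact fun x hx => (sin_pos_on n hn hx).ne'

lemma memI (n : ℕ) (hn : 1 ≤ n) {x : ℝ} (hx : x ∈ Set.Icc (1:ℝ) (n:ℝ)) :
    Real.pi * x / (2 * n) ∈ Set.Icc (-(Real.pi/2)) (Real.pi/2) := by
  have hn0 : (0:ℝ) < n := by exact_mod_cast hn
  have h1 := hx.1
  constructor
  · have : (0:ℝ) ≤ Real.pi * x / (2 * n) := by positivity
    linarith [Real.pi_pos]
  · rw [div_le_iff₀ (by positivity)]
    nlinarith [Real.pi_pos, hx.1, hx.2]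

lemma sin_antitone (n : ℕ) (hn : 1 ≤ n) :
    AntitoneOn (fun x => -Real.log (Real.sin (Real.pi * x / (2 * n))))
      (Set.Icc (1:ℝ) (n:ℝ)) := by
  intro x hx y hy hxy
  have hn0 : (0:ℝ) < n := by exact_mod_cast hn
  simp only [neg_le_neg_iff]
  apply Real.log_le_log (sin_pos_on n hn hx)
  apply Real.strictMonoOn_sin.monotoneOn (memI n hn hx) (memI n hn hy)
  have : (0:ℝ) < 2 * n := by positivity
  gcongr

lemma g_convex (n : ℕ) (hn : 1 ≤ n) :
    ConvexOn ℝ (Set.Icc (1:ℝ) (n:ℝ))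
      (fun x => -Real.log (Real.sin (Real.pi * x / (2 * n)))) := by
  have hn0 : (0:ℝ) < n := by exact_mod_cast hn
  refine ⟨convex_Icc _ _, fun x hx y hy a b ha hb hab => ?_⟩
  set u := Real.sin (Real.pi * x / (2 * n)) with hu
  set v := Real.sin (Real.pi * y / (2 * n)) with hv
  have hu0 : 0 < u := sin_pos_on n hn hx
  have hv0 : 0 < v := sin_pos_on n hn hy
  have hsin : a * u + b * v ≤ Real.sin (Real.pi * (a * x + b * y) / (2 * n)) := by
    have := strictConcaveOn_sin_Icc.concaveOn.2 (arg_mem n hn hx) (arg_mem n hn hy) ha hb hab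
    simp only [smul_eq_mul] at this ⊢
    calc a * u + b * v ≤ Real.sin (a * (Real.pi * x / (2*n)) + b * (Real.pi * y / (2*n))) := this
      _ = Real.sin (Real.pi * (a * x + b * y) / (2 * n)) := by ring_nf
  have hpos : 0 < a * u + b * v := by
    rcases eq_or_lt_of_le ha with h | h
    · have hb1 : b = 1 := by linarith
      simp [← h, hb1, hv0]
    · positivity
  have hlog : a * Real.log u + b * Real.log v ≤ Real.log (a * u + b * v) := by
    have := strictConcaveOn_log_Ioi.concaveOn.2 (Set.mem_Ioi.2 hu0) (Set.mem_Ioi.2 hv0) ha hb hab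
    simpa using this
  have := Real.log_le_log hpos hsin
  simp only [smul_eq_mul]
  nlinarith [hlog, this]

lemma H_convex (n : ℕ) (hn : 1 ≤ n) : ConvexOn ℝ (Set.Icc (1:ℝ) (n:ℝ)) (Hfun n) := by
  have hf : ConvexOn ℝ (Set.Icc (1:ℝ) (n:ℝ)) (fun x => (n:ℝ) - x) := by
    refine ⟨convex_Icc _ _, fun x hx y hy a b ha hb hab => ?_⟩
    simp only [smul_eq_mul]
    nlinarith
  have hfa : AntitoneOn (fun x : ℝ => (n:ℝ) - x) (Set.Icc (1:ℝ) (n:ℝ)) :=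
    fun x _ y _ hxy => by dsimp only; linarith
  have := hf.mul (g_convex n hn)
    (fun x hx => sub_nonneg.2 hx.2)
    (fun x hx => neg_log_sin_nonneg n hn hx)
    (hfa.monovaryOn (sin_antitone n hn))
  exact this

lemma trapezoid (n : ℕ) (hn : 1 ≤ n) {a : ℝ} (ha : 1 ≤ a) (hb : a + 1 ≤ (n:ℝ)) :
    (∫ x in a..(a+1), Hfun n x) ≤ (Hfun n a + Hfun n (a+1)) / 2 := by
  have hsub : Set.Icc a (a+1) ⊆ Set.Icc (1:ℝ) (n:ℝ) :=
    Set.Icc_subset_Icc ha (by linarith)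
  have hma : a ∈ Set.Icc (1:ℝ) (n:ℝ) := ⟨ha, by linarith⟩
  have hmb : a + 1 ∈ Set.Icc (1:ℝ) (n:ℝ) := ⟨by linarith, hb⟩
  have hint : IntervalIntegrable (Hfun n) MeasureTheory.volume a (a+1) := by
    apply ContinuousOn.intervalIntegrable
    rw [Set.uIcc_of_le (by linarith)]
    exact (H_contOn n hn).mono hsub
  have hle : ∫ x in a..(a+1), Hfun n x ≤
      ∫ x in a..(a+1), ((a + 1 - x) * Hfun n a + (x - a) * Hfun n (a+1)) := by
    apply intervalIntegral.integral_mono_on (by linarith) hint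
      ((by continuity : Continuous fun x : ℝ => (a + 1 - x) * Hfun n a + (x - a) * Hfun n (a+1)).intervalIntegrable _ _)
    intro x hx
    have h1 : 0 ≤ a + 1 - x := by linarith [hx.2]
    have h2 : 0 ≤ x - a := by linarith [hx.1]
    have hab : (a + 1 - x) + (x - a) = 1 := by ring
    have := (H_convex n hn).2 hma hmb h1 h2 hab
    simp only [smul_eq_mul] at this
    calc Hfun n x = Hfun n ((a+1-x) * a + (x-a) * (a+1)) := by ring_nf
      _ ≤ _ := this
  refine hle.trans (le_of_eq ?_)
  rw [intervalIntegral.integral_add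
    ((by continuity : Continuous fun x : ℝ => (a + 1 - x) * Hfun n a).intervalIntegrable _ _)
    ((by continuity : Continuous fun x : ℝ => (x - a) * Hfun n (a+1)).intervalIntegrable _ _)]
  rw [intervalIntegral.integral_mul_const, intervalIntegral.integral_mul_const]
  have e1 : (∫ x in a..(a+1), (a + 1 - x)) = 1/2 := by
    have h := intervalIntegral.integral_sub (a := a) (b := a+1)
      (f := fun _ : ℝ => a + 1) (g := fun x : ℝ => x)
      (intervalIntegrable_const (μ := MeasureTheory.volume)) intervalIntegral.intervalIntegrable_id
    rw [h, integral_id, integral_const]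
    simp; ring
  have e2 : (∫ x in a..(a+1), (x - a)) = 1/2 := by
    have h := intervalIntegral.integral_sub (a := a) (b := a+1)
      (f := fun x : ℝ => x) (g := fun _ : ℝ => a)
      intervalIntegral.intervalIntegrable_id (intervalIntegrable_const (μ := MeasureTheory.volume))
    rw [h, integral_id, integral_const]
    simp; ring
  rw [e1, e2]; ring

lemma key_sum (n : ℕ) (hn : 1 ≤ n) :
    (∫ x in (1:ℝ)..(n:ℝ), Hfun n x) + (1/2) * Hfun n 1
      ≤ ∑ k ∈ Finset.range (n-1), Hfun n (1 + k) := by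
  set m := n - 1 with hm
  have hcast : 1 + (m:ℝ) = (n:ℝ) := by
    rw [hm, Nat.cast_sub hn]; ring
  set a : ℕ → ℝ := fun k => 1 + k with ha
  have hsubk : ∀ k, k < m → Set.Icc (a k) (a (k+1)) ⊆ Set.Icc (1:ℝ) (n:ℝ) := by
    intro k hk
    apply Set.Icc_subset_Icc
    · simp [ha]
    · simp only [ha]
      push_cast
      rw [← hcast]
      have : (k:ℝ) + 1 ≤ (m:ℝ) := by exact_mod_cast hk
      linarith
  have hint : ∀ k, k < m → IntervalIntegrable (Hfun n) MeasureTheory.volume (a k) (a (k+1)) := by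
    intro k hk
    apply ContinuousOn.intervalIntegrable
    rw [Set.uIcc_of_le (by simp [ha])]
    exact (H_contOn n hn).mono (hsubk k hk)
  have hsplit := intervalIntegral.sum_integral_adjacent_intervals
    (f := Hfun n) (μ := MeasureTheory.volume) (a := a) (n := m) hint
  have ha0 : a 0 = 1 := by simp [ha]
  have ham : a m = (n:ℝ) := by simp [ha, hcast]
  have hstep : ∀ k ∈ Finset.range m,
      (∫ x in a k..a (k+1), Hfun n x) ≤ (Hfun n (a k) + Hfun n (a (k+1))) / 2 := by
    intro k hk
    rw [Finset.mem_range] at hk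
    have h1 : (1:ℝ) ≤ a k := by simp [ha]
    have h2 : a k + 1 ≤ (n:ℝ) := by
      simp only [ha]; rw [← hcast]
      have : (k:ℝ) + 1 ≤ (m:ℝ) := by exact_mod_cast hk
      linarith
    have hstep1 : a (k+1) = a k + 1 := by simp [ha]; push_cast; ring
    rw [hstep1]
    exact trapezoid n hn h1 h2
  have hsum : (∫ x in (1:ℝ)..(n:ℝ), Hfun n x)
      ≤ ∑ k ∈ Finset.range m, (Hfun n (a k) + Hfun n (a (k+1))) / 2 := by
    rw [← ha0, ← ham, ← hsplit]
    exact Finset.sum_le_sum hstep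
  have hzero : Hfun n (a m) = 0 := by
    rw [ham, Hfun]; simp
  have hreindex : ∑ k ∈ Finset.range m, Hfun n (a (k+1))
      = ∑ k ∈ Finset.range m, Hfun n (a k) + Hfun n (a m) - Hfun n (a 0) := by
    have h1 := Finset.sum_range_succ' (fun k => Hfun n (a k)) m
    have h2 := Finset.sum_range_succ (fun k => Hfun n (a k)) m
    rw [h2] at h1
    linarith
  have hhalf : ∑ k ∈ Finset.range m, (Hfun n (a k) + Hfun n (a (k+1))) / 2
      = ∑ k ∈ Finset.range m, Hfun n (a k) - (1/2) * Hfun n (a 0) := by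
    rw [← Finset.sum_div, Finset.sum_add_distrib, hreindex, hzero]
    ring
  rw [hhalf, ha0] at hsum
  have : ∑ k ∈ Finset.range m, Hfun n (a k) = ∑ k ∈ Finset.range m, Hfun n (1 + k) := rfl
  linarith [hsum, this]

/-- With `F(n) = 2^(n(n-1)/2) ∏_{j=1}^{n-1} sin(jπ/(2n))^(n-j)`, for every integer `n ≥ 1`,
`-log F(n) ≥ -∫_1^n (n-x) log(sin(πx/(2n))) dx - (1/2)(n-1) log(sin(π/(2n))) - (n(n-1)/2) log 2`. -/
theorem neg_log_F_lower_bound (n : ℕ) (hn : 1 ≤ n) :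
    -Real.log ((2 : ℝ) ^ (n * (n - 1) / 2) *
        ∏ j ∈ Finset.Icc 1 (n - 1), Real.sin ((j : ℝ) * Real.pi / (2 * n)) ^ (n - j))
      ≥ -(∫ x in (1 : ℝ)..(n : ℝ), ((n : ℝ) - x) * Real.log (Real.sin (Real.pi * x / (2 * n))))
        - (1 / 2) * ((n : ℝ) - 1) * Real.log (Real.sin (Real.pi / (2 * n)))
        - ((n * (n - 1) / 2 : ℕ) : ℝ) * Real.log 2 := by
  have hn0 : (0:ℝ) < n := by exact_mod_cast hn
  have hmem : ∀ j ∈ Finset.Icc 1 (n-1), (j:ℝ) ∈ Set.Icc (1:ℝ) (n:ℝ) := by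
    intro j hj; rw [Finset.mem_Icc] at hj
    constructor
    · exact_mod_cast hj.1
    · exact_mod_cast hj.2.trans (Nat.sub_le n 1)
  have hspos : ∀ j ∈ Finset.Icc 1 (n-1), 0 < Real.sin ((j:ℝ) * Real.pi / (2*n)) := by
    intro j hj
    rw [mul_comm (j:ℝ) Real.pi]
    exact sin_pos_on n hn (hmem j hj)
  have hlog : Real.log ((2 : ℝ) ^ (n * (n - 1) / 2) *
        ∏ j ∈ Finset.Icc 1 (n - 1), Real.sin ((j : ℝ) * Real.pi / (2 * n)) ^ (n - j))
      = ((n * (n - 1) / 2 : ℕ) : ℝ) * Real.log 2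
        + ∑ j ∈ Finset.Icc 1 (n-1),
            ((n - j : ℕ) : ℝ) * Real.log (Real.sin ((j:ℝ) * Real.pi / (2*n))) := by
    rw [Real.log_mul (by positivity)
        (Finset.prod_ne_zero_iff.2 fun j hj => pow_ne_zero _ (hspos j hj).ne'),
      Real.log_pow, Real.log_prod (fun j hj => pow_ne_zero _ (hspos j hj).ne')]
    congr 1
    exact Finset.sum_congr rfl fun j hj => by rw [Real.log_pow]
  have hsum_eq : ∑ j ∈ Finset.Icc 1 (n-1),
        ((n - j : ℕ) : ℝ) * Real.log (Real.sin ((j:ℝ) * Real.pi / (2*n)))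
      = -∑ k ∈ Finset.range (n-1), Hfun n (1 + k) := by
    have hIcc : Finset.Icc 1 (n-1) = Finset.Ico 1 n := by
      rw [← Finset.Ico_add_one_right_eq_Icc]
      congr 1
      omega
    rw [hIcc, Finset.sum_Ico_eq_sum_range, ← Finset.sum_neg_distrib]
    apply Finset.sum_congr rfl
    intro k hk
    rw [Finset.mem_range] at hk
    have hkn : 1 + k ≤ n := by omega
    have hc : ((n - (1 + k) : ℕ) : ℝ) = (n:ℝ) - (1 + k) := by
      rw [Nat.cast_sub hkn]; push_cast; ring
    rw [hc, Hfun]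
    push_cast
    ring_nf
  have hint_eq : (∫ x in (1:ℝ)..(n:ℝ), Hfun n x)
      = -(∫ x in (1 : ℝ)..(n : ℝ), ((n : ℝ) - x) * Real.log (Real.sin (Real.pi * x / (2 * n)))) := by
    rw [← intervalIntegral.integral_neg]
    simp only [Hfun, mul_neg, neg_neg]
  have h1_eq : Hfun n 1 = -(((n:ℝ) - 1) * Real.log (Real.sin (Real.pi / (2 * n)))) := by
    rw [Hfun]; simp
  have hkey := key_sum n hn
  rw [hlog]
  rw [hsum_eq]
  rw [hint_eq, h1_eq] at hkey
  linarith
end
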